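/- The symmetrized polydisc G_n is linearly convex: for every point z in ℂⁿ \ G_n there is a complex affine hyperplane through z disjoint from G_n. -/

import Mathlib

open Metric Finset

/-- The map whose `k`-th component is the `(k+1)`-st elementary symmetric polynomial. -/
noncomputable def symPoly (n : ℕ) (μ : Fin n → ℂ) : Fin n → ℂ :=
  fun k => ∑ s ∈ Finset.powersetCard ((k : ℕ) + 1) Finset.univ, ∏ i ∈ s, μ i

/-- The symmetrized `n`-disc `𝔾ₙ = πₙ(𝔻ⁿ)`. -/
def symPolydisc (n : ℕ) : Set (Fin n → ℂ) :=
  {z | ∃ μ : Fin n → ℂ, (∀ i, ‖μ i‖ < 1) ∧ symPoly n μ = z}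

open Polynomial

noncomputable def Qpoly (n : ℕ) (y : Fin n → ℂ) : Polynomial ℂ :=
  X ^ n + ∑ j : Fin n, C ((-1) ^ ((j : ℕ) + 1) * y j) * X ^ (n - 1 - (j : ℕ))

lemma Qpoly_coeff (n : ℕ) (y : Fin n → ℂ) (j : Fin n) :
    (Qpoly n y).coeff (n - 1 - (j : ℕ)) = (-1) ^ ((j : ℕ) + 1) * y j := by
  have hj := j.2
  rw [Qpoly, coeff_add, coeff_X_pow, if_neg (by omega), finset_sum_coeff, zero_add]
  rw [Finset.sum_eq_single j]
  · rw [coeff_C_mul, coeff_X_pow, if_pos rfl, mul_one]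
  · intro b _ hb
    have hb' : n - 1 - (b : ℕ) ≠ n - 1 - (j : ℕ) := by
      have := b.2; intro h; exact hb (Fin.ext (by omega))
    rw [coeff_C_mul, coeff_X_pow, if_neg (by omega), mul_zero]
  · simp

lemma prod_X_sub_C_eq (n : ℕ) (ν : Fin n → ℂ) :
    (∏ i, (X - C (ν i))) = Qpoly n (symPoly n ν) := by
  have hcard : Multiset.card (Finset.univ.val.map ν) = n := by simp
  have hprod : (∏ i, (X - C (ν i)))
      = ((Finset.univ.val.map ν).map fun t => X - C t).prod := by
    rw [Multiset.map_map]; rfl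
  have hcoeff : ∀ k : ℕ, k ≤ n → (∏ i, (X - C (ν i))).coeff k
      = (-1) ^ (n - k) * ((Finset.univ.powersetCard (n - k)).sum fun t => t.prod ν) := by
    intro k hk
    rw [hprod, Multiset.prod_X_sub_C_coeff _ (by rwa [hcard]), hcard,
      Finset.esymm_map_val]
  have hmonic : (∏ i, (X - C (ν i))).Monic := monic_prod_of_monic _ _ fun i _ => monic_X_sub_C _
  have hdeg : (∏ i, (X - C (ν i))).natDegree = n := by
    rw [natDegree_prod_of_monic _ _ fun i _ => monic_X_sub_C _]
    simp
  ext k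
  rcases lt_trichotomy k n with hlt | rfl | hgt
  · have hk : n - 1 - (n - 1 - k) = k := by omega
    have hj : n - 1 - k < n := by omega
    have h2 := Qpoly_coeff n (symPoly n ν) ⟨n - 1 - k, hj⟩
    rw [show ((⟨n - 1 - k, hj⟩ : Fin n) : ℕ) = n - 1 - k from rfl, hk] at h2
    rw [h2, hcoeff k hlt.le, symPoly]
    rw [show n - 1 - k + 1 = n - k by omega]
  · have h0 : ∑ j : Fin k, (C ((-1 : ℂ) ^ ((j : ℕ) + 1) * symPoly k ν j)
        * X ^ (k - 1 - (j : ℕ))).coeff k = 0 :=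
      Finset.sum_eq_zero fun j _ => by
        rw [coeff_C_mul, coeff_X_pow, if_neg (by have := j.2; omega), mul_zero]
    rw [hcoeff _ le_rfl, Nat.sub_self, Qpoly, coeff_add, coeff_X_pow, if_pos rfl,
      finset_sum_coeff, h0, add_zero]
    simp
  · have h0 : ∑ j : Fin n, (C ((-1 : ℂ) ^ ((j : ℕ) + 1) * symPoly n ν j)
        * X ^ (n - 1 - (j : ℕ))).coeff k = 0 :=
      Finset.sum_eq_zero fun j _ => by
        rw [coeff_C_mul, coeff_X_pow, if_neg (by have := j.2; omega), mul_zero]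
    rw [coeff_eq_zero_of_natDegree_lt (by rw [hdeg]; exact hgt), Qpoly, coeff_add,
      coeff_X_pow, if_neg (by omega), finset_sum_coeff, h0, add_zero]

lemma Qpoly_monic (n : ℕ) (hn : 0 < n) (y : Fin n → ℂ) : (Qpoly n y).Monic := by
  apply monic_X_pow_add
  apply lt_of_le_of_lt (degree_sum_le _ _)
  apply Finset.sup_lt_iff (by exact_mod_cast WithBot.bot_lt_coe n) |>.2
  intro j _
  apply lt_of_le_of_lt (degree_C_mul_X_pow_le _ _)
  exact_mod_cast Nat.lt_of_le_of_lt (by omega : n - 1 - (j : ℕ) ≤ n - 1) (by omega)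

lemma Qpoly_natDegree (n : ℕ) (hn : 0 < n) (y : Fin n → ℂ) : (Qpoly n y).natDegree = n := by
  have h : (Qpoly n y).degree = n := by
    rw [Qpoly]
    rw [degree_add_eq_left_of_degree_lt]
    · exact degree_X_pow n
    · rw [degree_X_pow]
      apply lt_of_le_of_lt (degree_sum_le _ _)
      apply Finset.sup_lt_iff (by exact_mod_cast WithBot.bot_lt_coe n) |>.2
      intro j _
      apply lt_of_le_of_lt (degree_C_mul_X_pow_le _ _)
      exact_mod_cast Nat.lt_of_le_of_lt (by omega : n - 1 - (j : ℕ) ≤ n - 1) (by omega)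
  exact natDegree_eq_of_degree_eq_some h

lemma Qpoly_eval (n : ℕ) (y : Fin n → ℂ) (t : ℂ) :
    (Qpoly n y).eval t = t ^ n + ∑ j : Fin n, (-1) ^ ((j : ℕ) + 1) * y j * t ^ (n - 1 - (j : ℕ)) := by
  simp [Qpoly, eval_finset_sum]

lemma helper_main (n : ℕ) (hpos : 0 < n) (z : Fin n → ℂ)
    (hz : z ∉ symPolydisc n) :
    ∃ v : Fin n → ℂ, v ≠ 0 ∧ ∀ w ∈ symPolydisc n, ∑ i, (w i - z i) * v i ≠ 0 := by
  have hmonic := Qpoly_monic n hpos z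
  have hsplits := IsAlgClosed.splits (Qpoly n z)
  have hcard : Multiset.card (Qpoly n z).roots = n := by
    rw [splits_iff_card_roots.mp hsplits, Qpoly_natDegree n hpos]
  obtain ⟨l, hl⟩ : ∃ l : List ℂ, (Qpoly n z).roots = ↑l :=
    ⟨(Qpoly n z).roots.toList, ((Qpoly n z).roots.coe_toList).symm⟩
  have hlen : l.length = n := by rw [← hcard, hl, Multiset.coe_card]
  set μ : Fin n → ℂ := fun i => l.get (Fin.cast hlen.symm i) with hμ
  have hfac : Qpoly n z = ∏ i : Fin n, (X - C (μ i)) := by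
    rw [hsplits.eq_prod_roots_of_monic hmonic, hl]
    rw [Multiset.map_coe, Multiset.prod_coe]
    conv_lhs => rw [← List.ofFn_getElem (xs := l), List.map_ofFn, List.prod_ofFn]
    rw [← Fin.prod_congr' _ hlen]
    rfl
  have hzeq : z = symPoly n μ := by
    have h1 := prod_X_sub_C_eq n μ
    funext j
    have h2 : (Qpoly n z).coeff (n - 1 - (j : ℕ))
        = (Qpoly n (symPoly n μ)).coeff (n - 1 - (j : ℕ)) := by rw [hfac, h1]
    rw [Qpoly_coeff, Qpoly_coeff] at h2
    exact mul_left_cancel₀ (pow_ne_zero _ (by norm_num : (-1 : ℂ) ≠ 0)) h2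
  have hex : ∃ i, 1 ≤ ‖μ i‖ := by
    by_contra h
    push_neg at h
    exact hz ⟨μ, h, hzeq.symm⟩
  obtain ⟨i₀, hi₀⟩ := hex
  set lam : ℂ := μ i₀ with hlam
  have hroot : (Qpoly n z).eval lam = 0 := by
    rw [hfac, eval_prod]
    exact Finset.prod_eq_zero (Finset.mem_univ i₀) (by simp [hlam])
  refine ⟨fun j => (-1) ^ ((j : ℕ) + 1) * lam ^ (n - 1 - (j : ℕ)), ?_, ?_⟩
  · intro h
    have h2 := congrFun h ⟨n - 1, by omega⟩
    simp only [Pi.zero_apply] at h2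
    rw [Nat.sub_self, pow_zero, mul_one] at h2
    exact pow_ne_zero _ (by norm_num : (-1 : ℂ) ≠ 0) h2
  · rintro w ⟨ν, hν, rfl⟩
    have key : ∀ y : Fin n → ℂ, (Qpoly n y).eval lam
        = lam ^ n + ∑ j, y j * ((-1) ^ ((j : ℕ) + 1) * lam ^ (n - 1 - (j : ℕ))) := by
      intro y
      rw [Qpoly_eval]
      congr 1
      exact Finset.sum_congr rfl fun j _ => by ring
    have hprod : (Qpoly n (symPoly n ν)).eval lam = ∏ i, (lam - ν i) := by
      rw [← prod_X_sub_C_eq, eval_prod]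
      simp
    have hsum : ∑ i, (symPoly n ν i - z i) * ((-1) ^ ((i : ℕ) + 1) * lam ^ (n - 1 - (i : ℕ)))
        = ∏ i, (lam - ν i) := by
      have e2 := key z
      have e3 := key (symPoly n ν)
      rw [hroot] at e2
      rw [hprod] at e3
      calc ∑ i, (symPoly n ν i - z i) * ((-1) ^ ((i : ℕ) + 1) * lam ^ (n - 1 - (i : ℕ)))
          = (∑ i, symPoly n ν i * ((-1) ^ ((i : ℕ) + 1) * lam ^ (n - 1 - (i : ℕ))))
            - ∑ i, z i * ((-1) ^ ((i : ℕ) + 1) * lam ^ (n - 1 - (i : ℕ))) := by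
            rw [← Finset.sum_sub_distrib]
            exact Finset.sum_congr rfl fun i _ => by ring
        _ = ∏ i, (lam - ν i) := by linear_combination e2 - e3
    show (∑ i, (symPoly n ν i - z i) * ((-1) ^ ((i : ℕ) + 1) * lam ^ (n - 1 - (i : ℕ)))) ≠ 0
    rw [hsum, Finset.prod_ne_zero_iff]
    intro i _ h
    rw [sub_eq_zero] at h
    exact absurd (hν i) (not_lt.mpr (h ▸ hi₀))

/-- The symmetrized polydisc is linearly convex: through every point of the complement
there is a complex affine hyperplane disjoint from `𝔾ₙ`. -/
theorem symPolydisc_linearly_convex (n : ℕ) (z : Fin n → ℂ) (hz : z ∉ symPolydisc n) :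
    ∃ v : Fin n → ℂ, v ≠ 0 ∧ ∀ w ∈ symPolydisc n, ∑ i, (w i - z i) * v i ≠ 0 := by
  obtain _ | m := n
  · exact absurd ⟨Fin.elim0, fun i => i.elim0, funext fun k => k.elim0⟩ hz
  exact helper_main (m + 1) (Nat.succ_pos m) z hz
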